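/- (Optimal truncation index asymptotics.) Let p ≥ 2 be an integer, 0 ≤ ν < 1, κ = 2(p−1), and 𝒜 = p − 3/2 − (κ+1)ν. Define the ratio of consecutive terms r(N) = [(2p(N+1) − 2pν)! / (2pN − 2pν)!] · 1/((N+1)(N+1−ν)) (with factorials interpreted via the Gamma function). Then as N → ∞, r(N) = (2pN)^{2p} N^{−2} (1 + 𝒜/N + O(N^{−2})). -/

import Mathlib

open Real Filter Asymptotics Finset

lemma gamma_prod (n : ℕ) (y : ℝ) (hy : 0 < y) :
    Real.Gamma (y + n) = (∏ j ∈ Finset.range n, (y + j)) * Real.Gamma y := by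
  induction n with
  | zero => simp
  | succ n ih =>
    have h1 : y + (n + 1 : ℕ) = (y + n) + 1 := by push_cast; ring
    rw [h1, Real.Gamma_add_one (by positivity), ih, Finset.prod_range_succ]
    ring

lemma prod_asym {ι : Type*} [DecidableEq ι] (s : Finset ι) (c : ι → ℝ) :
    (fun N : ℕ => (∏ j ∈ s, (1 + c j / N)) - (1 + (∑ j ∈ s, c j) / N))
      =O[atTop] fun N : ℕ => ((N : ℝ))⁻¹ ^ 2 := by
  induction s using Finset.induction with
  | empty => simp only [Finset.prod_empty, Finset.sum_empty, zero_div, add_zero, sub_self]; exact isBigO_zero _ _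
  | insert a s ha ih =>
    have key : ∀ N : ℕ, (∏ j ∈ insert a s, (1 + c j / N)) - (1 + (∑ j ∈ insert a s, c j) / N)
        = (1 + c a / N) * ((∏ j ∈ s, (1 + c j / N)) - (1 + (∑ j ∈ s, c j) / N))
          + (c a * (∑ j ∈ s, c j)) * ((N : ℝ))⁻¹ ^ 2 := by
      intro N
      rw [Finset.prod_insert ha, Finset.sum_insert ha]
      simp only [div_eq_mul_inv]
      ring
    have hb : (fun N : ℕ => 1 + c a / (N : ℝ)) =O[atTop] (fun _ : ℕ => (1 : ℝ)) := by
      refine Filter.Tendsto.isBigO_one (c := (1:ℝ)) ℝ ?_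
      have : Tendsto (fun N : ℕ => c a / (N : ℝ)) atTop (nhds 0) :=
        tendsto_const_nhds.div_atTop tendsto_natCast_atTop_atTop
      simpa using tendsto_const_nhds.add this
    have h1 := hb.mul ih
    simp only [one_mul] at h1
    have h2 : (fun N : ℕ => (c a * (∑ j ∈ s, c j)) * ((N : ℝ))⁻¹ ^ 2) =O[atTop]
        fun N : ℕ => ((N : ℝ))⁻¹ ^ 2 := (isBigO_refl _ _).const_mul_left _
    exact ((h1.add h2).congr (fun N => (key N).symm) (fun N => rfl))

/-- Optimal truncation index asymptotics: with `κ = 2(p-1)`, `𝒜 = p - 3/2 - (κ+1)ν` and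
`r(N) = Γ(2p(N+1)-2pν+1)/Γ(2pN-2pν+1) · 1/((N+1)(N+1-ν))`, one has
`r(N) = (2pN)^{2p} N^{-2} (1 + 𝒜/N + O(N^{-2}))` as `N → ∞`. -/
theorem optimal_truncation_ratio_asymptotics (p : ℕ) (hp : 2 ≤ p) (ν : ℝ)
    (hν0 : 0 ≤ ν) (hν1 : ν < 1)
    (𝒜 : ℝ) (h𝒜 : 𝒜 = (p : ℝ) - 3/2 - (2 * ((p : ℝ) - 1) + 1) * ν)
    (r : ℕ → ℝ)
    (hr : ∀ N : ℕ, r N =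
      Real.Gamma (2 * p * ((N : ℝ) + 1) - 2 * p * ν + 1) /
        Real.Gamma (2 * p * (N : ℝ) - 2 * p * ν + 1) *
        (1 / (((N : ℝ) + 1) * ((N : ℝ) + 1 - ν)))) :
    (fun N : ℕ => r N - (2 * (p : ℝ) * (N : ℝ)) ^ (2 * p) * ((N : ℝ))⁻¹ ^ 2 * (1 + 𝒜 / (N : ℝ)))
      =O[atTop] (fun N : ℕ => (2 * (p : ℝ) * (N : ℝ)) ^ (2 * p) * ((N : ℝ))⁻¹ ^ 2 * ((N : ℝ))⁻¹ ^ 2) := by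
  have hp2 : (2:ℝ) ≤ (p:ℝ) := by exact_mod_cast hp
  have hp0 : (0:ℝ) < (p:ℝ) := by linarith
  -- step 1 : explicit rational form of r N for N ≥ 1
  have hrN : ∀ N : ℕ, 1 ≤ N → r N =
      (2 * (p:ℝ) * N) ^ (2*p) *
        (∏ j ∈ Finset.range (2*p), (1 + (((j:ℝ) + 1 - 2*(p:ℝ)*ν) / (2*(p:ℝ))) / N)) *
        (1 / (((N:ℝ) + 1) * ((N:ℝ) + 1 - ν))) := by
    intro N hN
    have hN1 : (1:ℝ) ≤ (N:ℝ) := by exact_mod_cast hN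
    have hy0 : 0 < 2*(p:ℝ)*N - 2*p*ν + 1 := by nlinarith
    have harg : 2*(p:ℝ)*((N:ℝ)+1) - 2*(p:ℝ)*ν + 1 = (2*(p:ℝ)*N - 2*p*ν + 1) + ((2*p : ℕ) : ℝ) := by
      push_cast; ring
    have hΓ : Real.Gamma (2*(p:ℝ)*((N:ℝ)+1) - 2*(p:ℝ)*ν + 1) / Real.Gamma (2*(p:ℝ)*N - 2*(p:ℝ)*ν + 1)
        = ∏ j ∈ Finset.range (2*p), ((2*(p:ℝ)*N - 2*p*ν + 1) + j) := by
      rw [harg, gamma_prod _ _ hy0, mul_div_assoc,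
        div_self (Real.Gamma_pos_of_pos hy0).ne', mul_one]
    rw [hr N, hΓ]
    congr 1
    have hfac : ∀ j ∈ Finset.range (2*p), ((2*(p:ℝ)*N - 2*p*ν + 1) + (j:ℝ))
        = (2*(p:ℝ)*N) * (1 + (((j:ℝ) + 1 - 2*(p:ℝ)*ν) / (2*(p:ℝ))) / N) := by
      intro j _
      have hNne : (N:ℝ) ≠ 0 := by linarith
      have hpne : 2*(p:ℝ) ≠ 0 := by linarith
      field_simp
      ring
    rw [Finset.prod_congr rfl hfac, Finset.prod_mul_distrib, Finset.prod_const, Finset.card_range]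
  -- sum of coefficients
  have h2p1 : 1 ≤ 2*p := by omega
  have hsum2 : (∑ j ∈ Finset.range (2*p), (j:ℝ)) * 2 = (2*(p:ℝ)) * (2*(p:ℝ) - 1) := by
    have h := Finset.sum_range_id_mul_two (2*p)
    calc (∑ j ∈ Finset.range (2*p), (j:ℝ)) * 2
        = (((∑ j ∈ Finset.range (2*p), j) * 2 : ℕ) : ℝ) := by push_cast; ring
      _ = ((2*p*(2*p-1) : ℕ) : ℝ) := by rw [h]
      _ = 2*(p:ℝ)*(2*(p:ℝ)-1) := by rw [Nat.cast_mul, Nat.cast_sub h2p1]; push_cast; ring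
  have hS : ∑ j ∈ Finset.range (2*p), (j:ℝ) = (p:ℝ)*(2*(p:ℝ)-1) := by linarith
  have hσ : ∑ j ∈ Finset.range (2*p), (((j:ℝ) + 1 - 2*(p:ℝ)*ν) / (2*(p:ℝ))) = 𝒜 + 2 - ν := by
    rw [← Finset.sum_div]
    have hsum : ∑ j ∈ Finset.range (2*p), ((j:ℝ) + 1 - 2*(p:ℝ)*ν)
        = (p:ℝ)*(2*(p:ℝ)-1) + (2*(p:ℝ))*(1 - 2*(p:ℝ)*ν) := by
      calc ∑ j ∈ Finset.range (2*p), ((j:ℝ) + 1 - 2*(p:ℝ)*ν)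
          = ∑ j ∈ Finset.range (2*p), ((j:ℝ) + (1 - 2*(p:ℝ)*ν)) :=
            Finset.sum_congr rfl (fun j _ => by ring)
        _ = (∑ j ∈ Finset.range (2*p), (j:ℝ)) + (2*p : ℕ) • (1 - 2*(p:ℝ)*ν) := by
            rw [Finset.sum_add_distrib, Finset.sum_const, Finset.card_range]
        _ = (p:ℝ)*(2*(p:ℝ)-1) + (2*(p:ℝ))*(1 - 2*(p:ℝ)*ν) := by
            rw [hS, nsmul_eq_mul]; push_cast; ring
    rw [hsum, h𝒜]
    have : 2*(p:ℝ) ≠ 0 := by linarith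
    field_simp
    ring
  -- H : product minus triple product
  have hH : (fun N : ℕ => (∏ j ∈ Finset.range (2*p), (1 + (((j:ℝ) + 1 - 2*(p:ℝ)*ν) / (2*(p:ℝ))) / N))
      - (1 + 𝒜/(N:ℝ)) * (1 + 1/(N:ℝ)) * (1 + (1-ν)/(N:ℝ))) =O[atTop]
      fun N : ℕ => ((N:ℝ))⁻¹ ^ 2 := by
    have h1 := prod_asym (Finset.range (2*p)) (fun j => ((j:ℝ) + 1 - 2*(p:ℝ)*ν) / (2*(p:ℝ)))
    rw [hσ] at h1
    have h2 : (fun N : ℕ => (1 + (𝒜 + 2 - ν)/(N:ℝ))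
        - (1 + 𝒜/(N:ℝ)) * (1 + 1/(N:ℝ)) * (1 + (1-ν)/(N:ℝ))) =O[atTop]
        fun N : ℕ => ((N:ℝ))⁻¹ ^ 2 := by
      have key : ∀ N : ℕ, (1 + (𝒜 + 2 - ν)/(N:ℝ))
          - (1 + 𝒜/(N:ℝ)) * (1 + 1/(N:ℝ)) * (1 + (1-ν)/(N:ℝ))
          = (-(𝒜*(2-ν) + (1-ν)) - 𝒜*(1-ν) * ((N:ℝ))⁻¹) * ((N:ℝ))⁻¹ ^ 2 := by
        intro N; simp only [div_eq_mul_inv]; ring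
      have hb : (fun N : ℕ => (-(𝒜*(2-ν) + (1-ν)) - 𝒜*(1-ν) * ((N:ℝ))⁻¹)) =O[atTop]
          (fun _ : ℕ => (1:ℝ)) := by
        refine Filter.Tendsto.isBigO_one (c := -(𝒜*(2-ν) + (1-ν))) ℝ ?_
        have h0 : Tendsto (fun N : ℕ => ((N:ℝ))⁻¹) atTop (nhds 0) :=
          tendsto_inv_atTop_zero.comp tendsto_natCast_atTop_atTop
        simpa using tendsto_const_nhds.sub ((tendsto_const_nhds (x := 𝒜*(1-ν))).mul h0)
      have h3 := hb.mul (isBigO_refl (fun N : ℕ => ((N:ℝ))⁻¹ ^ 2) atTop)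
      simp only [one_mul] at h3
      exact h3.congr (fun N => (key N).symm) fun _ => rfl
    exact (h1.add h2).congr (fun N => sub_add_sub_cancel _ _ _) fun _ => rfl
  -- Q : N^2 / D is O(1)
  have hQ : (fun N : ℕ => ((N:ℝ))^2 / (((N:ℝ)+1)*((N:ℝ)+1-ν))) =O[atTop]
      (fun _ : ℕ => (1:ℝ)) := by
    have a1 : Tendsto (fun N : ℕ => 1 + 1/(N:ℝ)) atTop (nhds 1) := by
      simpa using tendsto_const_nhds.add
        ((tendsto_const_nhds (x := (1:ℝ))).div_atTop tendsto_natCast_atTop_atTop)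
    have a2 : Tendsto (fun N : ℕ => 1 + (1-ν)/(N:ℝ)) atTop (nhds 1) := by
      simpa using tendsto_const_nhds.add
        ((tendsto_const_nhds (x := (1-ν))).div_atTop tendsto_natCast_atTop_atTop)
    have t1 : Tendsto (fun N : ℕ => ((1 + 1/(N:ℝ))*(1 + (1-ν)/(N:ℝ)))⁻¹) atTop (nhds 1) := by
      have := (a1.mul a2).inv₀ (by norm_num)
      simpa using this
    have heq : (fun N : ℕ => ((1 + 1/(N:ℝ))*(1 + (1-ν)/(N:ℝ)))⁻¹) =ᶠ[atTop]
        (fun N : ℕ => ((N:ℝ))^2 / (((N:ℝ)+1)*((N:ℝ)+1-ν))) := by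
      filter_upwards [eventually_ge_atTop 1] with N hN
      have hN1 : (1:ℝ) ≤ (N:ℝ) := by exact_mod_cast hN
      have h1 : (N:ℝ) + 1 ≠ 0 := by linarith
      have h2 : (N:ℝ) + 1 - ν ≠ 0 := by linarith
      have hN0 : (N:ℝ) ≠ 0 := by linarith
      have hprod : (1 + 1/(N:ℝ))*(1 + (1-ν)/(N:ℝ))
          = (((N:ℝ)+1)*((N:ℝ)+1-ν))/((N:ℝ))^2 := by field_simp; ring
      rw [hprod, inv_div]
    exact Filter.Tendsto.isBigO_one (c := (1:ℝ)) ℝ (t1.congr' heq)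
  -- F : the normalized remainder
  have hF : (fun N : ℕ =>
      (∏ j ∈ Finset.range (2*p), (1 + (((j:ℝ) + 1 - 2*(p:ℝ)*ν) / (2*(p:ℝ))) / N)) *
        (((N:ℝ))^2 / (((N:ℝ)+1)*((N:ℝ)+1-ν))) - (1 + 𝒜/(N:ℝ))) =O[atTop]
      fun N : ℕ => ((N:ℝ))⁻¹ ^ 2 := by
    have hmul := hH.mul hQ
    simp only [mul_one] at hmul
    refine hmul.congr' ?_ EventuallyEq.rfl
    filter_upwards [eventually_ge_atTop 1] with N hN
    have hN1 : (1:ℝ) ≤ (N:ℝ) := by exact_mod_cast hN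
    have h1 : (N:ℝ) + 1 ≠ 0 := by linarith
    have h2 : (N:ℝ) + 1 - ν ≠ 0 := by linarith
    have hN0 : (N:ℝ) ≠ 0 := by linarith
    have htriple : (1 + 𝒜/(N:ℝ)) * (1 + 1/(N:ℝ)) * (1 + (1-ν)/(N:ℝ)) *
        (((N:ℝ))^2 / (((N:ℝ)+1)*((N:ℝ)+1-ν))) = 1 + 𝒜/(N:ℝ) := by
      field_simp
      ring
    rw [sub_mul, htriple]
  -- assemble
  have hmain := (isBigO_refl (fun N : ℕ => (2*(p:ℝ)*(N:ℝ))^(2*p) * ((N:ℝ))⁻¹ ^ 2) atTop).mul hF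
  refine hmain.congr' ?_ EventuallyEq.rfl
  filter_upwards [eventually_ge_atTop 1] with N hN
  have hN1 : (1:ℝ) ≤ (N:ℝ) := by exact_mod_cast hN
  have hN0 : (N:ℝ) ≠ 0 := by linarith
  have h1 : (N:ℝ) + 1 ≠ 0 := by linarith
  have h2 : (N:ℝ) + 1 - ν ≠ 0 := by linarith
  rw [hrN N hN]
  field_simp
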